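/- Assuming the numerical range W(B) is a (1+√2)-spectral set for every matrix B (i.e. ‖g(B)‖_2 ≤ (1+√2) sup_{z∈W(B)} |g(z)| for rational g with poles off W(B)), the Arnoldi-OR iterate x_k satisfies ‖R(A)b − x_k‖_S / ‖b‖_S ≤ (1+√2) · min over polynomials p of degree ≤ k−1 of max_{z ∈ W(S^{1/2} A S^{-1/2})} |R(z) − p(z)|, provided R is analytic on W(S^{1/2} A S^{-1/2}). -/

import Mathlib

/-- The Krylov space `K_k(A,b) = span{b, Ab, ..., A^{k-1}b}`. -/
noncomputable def Krylov (n : ℕ) (A : Matrix (Fin n) (Fin n) ℂ) (b : EuclideanSpace ℂ (Fin n))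
    (k : ℕ) : Submodule ℂ (EuclideanSpace ℂ (Fin n)) :=
  Submodule.span ℂ {x | ∃ i < k, x = (A ^ i).mulVec b}

/-- The `S`-norm `‖v‖_S = ⟨v, S v⟩^{1/2}` for a matrix `S`. -/
noncomputable def Snorm (n : ℕ) (S : Matrix (Fin n) (Fin n) ℂ)
    (v : EuclideanSpace ℂ (Fin n)) : ℝ :=
  Real.sqrt (@inner ℂ (EuclideanSpace ℂ (Fin n)) _ v (WithLp.toLp 2 (S.mulVec v))).re

/-- The numerical range `W(A) = {⟨Aq,q⟩ : ‖q‖₂ = 1}`. -/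
def numRange (n : ℕ) (A : Matrix (Fin n) (Fin n) ℂ) : Set ℂ :=
  {z | ∃ q : EuclideanSpace ℂ (Fin n), ‖q‖ = 1 ∧
    @inner ℂ (EuclideanSpace ℂ (Fin n)) _ q (WithLp.toLp 2 (A.mulVec q)) = z}

/-- The operator 2-norm of a matrix. -/
noncomputable def opNorm {m : ℕ} (M : Matrix (Fin m) (Fin m) ℂ) : ℝ :=
  ‖Matrix.toEuclideanCLM (𝕜 := ℂ) M‖

open Polynomial Matrix in
/-- `aeval` commutes with conjugation by an invertible matrix. -/
lemma aeval_conj_aux {n : ℕ} (M A : Matrix (Fin n) (Fin n) ℂ)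
    (h1 : M * M⁻¹ = 1) (h2 : M⁻¹ * M = 1) (q : Polynomial ℂ) :
    aeval (M * A * M⁻¹) q = M * aeval A q * M⁻¹ := by
  have key : ∀ X : Matrix (Fin n) (Fin n) ℂ, M⁻¹ * (M * X) = X := fun X => by
    rw [← mul_assoc, h2, one_mul]
  induction q using Polynomial.induction_on with
  | C a =>
    simp only [aeval_C, Algebra.algebraMap_eq_smul_one]
    rw [mul_smul_comm, mul_one, smul_mul_assoc, h1]
  | add q r hq hr =>
    simp only [map_add, hq, hr, mul_add, add_mul]
  | monomial m a ih =>
    have hrw : (C a * X ^ (m + 1)) = (C a * X ^ m) * X := by ring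
    rw [hrw, _root_.map_mul (aeval (M * A * M⁻¹)) (C a * X ^ m) X,
      _root_.map_mul (aeval A) (C a * X ^ m) X, ih, aeval_X, aeval_X]
    simp only [mul_assoc, key]

open Polynomial Matrix in
/-- Polynomial action on `b` lands in the Krylov space. -/
lemma aeval_mulVec_mem_Krylov {n k : ℕ} (A : Matrix (Fin n) (Fin n) ℂ)
    (b : EuclideanSpace ℂ (Fin n)) (p : Polynomial ℂ) (hp : p.degree < (k : WithBot ℕ)) :
    (WithLp.equiv 2 (Fin n → ℂ)).symm ((aeval A p).mulVec b) ∈ Krylov n A b k := by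
  by_cases hp0 : p = 0
  · simp only [hp0, map_zero, Matrix.zero_mulVec]
    exact Submodule.zero_mem _
  have hdeg : p.natDegree < k := by
    rwa [Polynomial.natDegree_lt_iff_degree_lt hp0]
  have hsum : ((aeval A p).mulVec b : Fin n → ℂ) =
      ∑ i ∈ Finset.range (p.natDegree + 1), p.coeff i • (A ^ i).mulVec b := by
    rw [Polynomial.aeval_eq_sum_range]
    ext j
    simp only [Matrix.mulVec, dotProduct, Matrix.sum_apply, Finset.sum_apply,
      Matrix.smul_apply, Pi.smul_apply, smul_eq_mul, Finset.sum_mul, Finset.mul_sum, mul_assoc]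
    rw [Finset.sum_comm]
  rw [hsum]
  have : (WithLp.equiv 2 (Fin n → ℂ)).symm
      (∑ i ∈ Finset.range (p.natDegree + 1), p.coeff i • (A ^ i).mulVec b)
      = ∑ i ∈ Finset.range (p.natDegree + 1), p.coeff i •
        (WithLp.equiv 2 (Fin n → ℂ)).symm ((A ^ i).mulVec b) := by
    show WithLp.toLp 2 _ = _
    rw [WithLp.toLp_sum]
    rfl
  rw [this]
  refine Submodule.sum_mem _ fun i hi => Submodule.smul_mem _ _ ?_
  refine Submodule.subset_span ⟨i, ?_, rfl⟩
  have := Finset.mem_range.mp hi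
  omega

open Matrix in
/-- `Snorm` with respect to `M * M` for Hermitian `M` is the Euclidean norm of `M *ᵥ v`. -/
lemma Snorm_sq_eq {n : ℕ} (M : Matrix (Fin n) (Fin n) ℂ) (hM : M.IsHermitian)
    (v : EuclideanSpace ℂ (Fin n)) :
    Snorm n (M * M) v = ‖(WithLp.equiv 2 (Fin n → ℂ)).symm (M.mulVec v)‖ := by
  unfold Snorm
  have h1 : @inner ℂ (EuclideanSpace ℂ (Fin n)) _ v (WithLp.toLp 2 ((M * M).mulVec v)) =
      @inner ℂ (EuclideanSpace ℂ (Fin n)) _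
        ((WithLp.equiv 2 (Fin n → ℂ)).symm (M.mulVec v))
        ((WithLp.equiv 2 (Fin n → ℂ)).symm (M.mulVec v)) := by
    rw [EuclideanSpace.inner_eq_star_dotProduct, EuclideanSpace.inner_eq_star_dotProduct]
    show dotProduct ((M * M).mulVec v) (star (WithLp.ofLp v)) =
      dotProduct (M.mulVec v) (star (M.mulVec v))
    rw [dotProduct_comm, dotProduct_comm (M.mulVec v)]
    rw [← Matrix.mulVec_mulVec, dotProduct_mulVec, Matrix.star_mulVec, hM.eq]
  rw [h1]
  rw [show (@inner ℂ (EuclideanSpace ℂ (Fin n)) _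
      ((WithLp.equiv 2 (Fin n → ℂ)).symm (M.mulVec v))
      ((WithLp.equiv 2 (Fin n → ℂ)).symm (M.mulVec v))).re =
      RCLike.re (@inner ℂ (EuclideanSpace ℂ (Fin n)) _
      ((WithLp.equiv 2 (Fin n → ℂ)).symm (M.mulVec v))
      ((WithLp.equiv 2 (Fin n → ℂ)).symm (M.mulVec v))) from rfl]
  rw [inner_self_eq_norm_sq, Real.sqrt_sq (norm_nonneg _)]

open Polynomial Matrix ComplexOrder in
/-- Assuming the numerical range is a `(1+√2)`-spectral set for every matrix
(Crouzeix–Palencia), the Arnoldi-OR iterate satisfies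
`‖R(A)b − x_k‖_S/‖b‖_S ≤ (1+√2)·min_{deg p ≤ k-1} max_{z ∈ W(S^{1/2}AS^{-1/2})} |R(z) − p(z)|`,
provided `R` is analytic on `W(S^{1/2}AS^{-1/2})`. -/
theorem stmt10 (n k : ℕ) (A : Matrix (Fin n) (Fin n) ℂ) (D N : Polynomial ℂ)
    (hD : IsUnit (aeval A D)) (b : EuclideanSpace ℂ (Fin n)) (hb : b ≠ 0)
    (M : Matrix (Fin n) (Fin n) ℂ) (hM : M.PosDef) (hMS : M * M = (aeval A D)ᴴ * aeval A D)
    (xk : EuclideanSpace ℂ (Fin n)) (hmem : xk ∈ Krylov n A b k)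
    (hmin : ∀ x ∈ Krylov n A b k,
      Snorm n ((aeval A D)ᴴ * aeval A D)
        ((WithLp.equiv 2 (Fin n → ℂ)).symm (((aeval A D)⁻¹ * aeval A N).mulVec b) - xk)
      ≤ Snorm n ((aeval A D)ᴴ * aeval A D)
        ((WithLp.equiv 2 (Fin n → ℂ)).symm (((aeval A D)⁻¹ * aeval A N).mulVec b) - x))
    (hCP : ∀ B : Matrix (Fin n) (Fin n) ℂ, ∀ gN gD : Polynomial ℂ,
      (∀ z ∈ numRange n B, gD.eval z ≠ 0) → IsUnit (aeval B gD) →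
      opNorm ((aeval B gD)⁻¹ * aeval B gN)
        ≤ (1 + Real.sqrt 2) * sSup ((fun z => ‖gN.eval z / gD.eval z‖) '' numRange n B))
    (hanal : ∀ z ∈ numRange n (M * A * M⁻¹), D.eval z ≠ 0) :
    ∀ p : Polynomial ℂ, p.degree < (k : WithBot ℕ) →
      Snorm n ((aeval A D)ᴴ * aeval A D)
          ((WithLp.equiv 2 (Fin n → ℂ)).symm (((aeval A D)⁻¹ * aeval A N).mulVec b) - xk)
        / Snorm n ((aeval A D)ᴴ * aeval A D) b
      ≤ (1 + Real.sqrt 2) *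
        sSup ((fun z => ‖N.eval z / D.eval z - p.eval z‖)
          '' numRange n (M * A * M⁻¹)) := by
  intro p hp
  -- basic invertibility facts
  have hMu : IsUnit M := hM.isUnit
  have hMdet : IsUnit M.det := (Matrix.isUnit_iff_isUnit_det M).mp hMu
  have h1 : M * M⁻¹ = 1 := Matrix.mul_nonsing_inv M hMdet
  have h2 : M⁻¹ * M = 1 := Matrix.nonsing_inv_mul M hMdet
  set DA := aeval A D with hDA
  have hDAdet : IsUnit DA.det := (Matrix.isUnit_iff_isUnit_det DA).mp hD
  have hd1 : DA * DA⁻¹ = 1 := Matrix.mul_nonsing_inv DA hDAdet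
  have hd2 : DA⁻¹ * DA = 1 := Matrix.nonsing_inv_mul DA hDAdet
  set B := M * A * M⁻¹ with hB
  set gN : Polynomial ℂ := N - p * D with hgN
  set NA := aeval A N with hNA
  set pA := aeval A p with hpA
  set gNA := aeval A gN with hgNA
  -- the error vector after subtracting p(A) b
  have hcomm : pA * DA = DA * pA := by
    rw [hpA, hDA, ← _root_.map_mul (aeval A) p D, ← _root_.map_mul (aeval A) D p, mul_comm]
  have hkey : DA⁻¹ * NA - pA = DA⁻¹ * gNA := by
    have : gNA = NA - pA * DA := by rw [hgNA, hgN, map_sub, _root_.map_mul (aeval A) p D]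
    rw [this, mul_sub, hcomm, ← mul_assoc, hd2, one_mul]
  -- rewrite Snorm in terms of M
  have hSnorm : ∀ v : EuclideanSpace ℂ (Fin n),
      Snorm n ((aeval A D)ᴴ * aeval A D) v =
        ‖(WithLp.equiv 2 (Fin n → ℂ)).symm (M.mulVec v)‖ := by
    intro v
    rw [← hMS]
    exact Snorm_sq_eq M hM.1 v
  -- p(A) b is in the Krylov space
  have hxk : (WithLp.equiv 2 (Fin n → ℂ)).symm (pA.mulVec b) ∈ Krylov n A b k :=
    aeval_mulVec_mem_Krylov A b p hp
  have hstep1 := hmin _ hxk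
  -- the difference vector equals DA⁻¹ gN(A) b
  have hdiff : (WithLp.equiv 2 (Fin n → ℂ)).symm ((DA⁻¹ * NA).mulVec b) -
      (WithLp.equiv 2 (Fin n → ℂ)).symm (pA.mulVec b) =
      (WithLp.equiv 2 (Fin n → ℂ)).symm ((DA⁻¹ * gNA).mulVec b) := by
    show WithLp.toLp 2 ((DA⁻¹ * NA).mulVec b - pA.mulVec b) = WithLp.toLp 2 ((DA⁻¹ * gNA).mulVec b)
    rw [← Matrix.sub_mulVec, hkey]
  rw [hdiff] at hstep1
  -- conjugated matrix identities
  have hBD : aeval B D = M * DA * M⁻¹ := aeval_conj_aux M A h1 h2 D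
  have hBgN : aeval B gN = M * gNA * M⁻¹ := aeval_conj_aux M A h1 h2 gN
  have hBDinv : (aeval B D)⁻¹ = M * DA⁻¹ * M⁻¹ := by
    rw [hBD]
    apply Matrix.inv_eq_right_inv
    calc M * DA * M⁻¹ * (M * DA⁻¹ * M⁻¹)
        = M * (DA * ((M⁻¹ * M) * (DA⁻¹ * M⁻¹))) := by
          simp only [mul_assoc]
      _ = 1 := by rw [h2, one_mul, ← mul_assoc DA DA⁻¹ M⁻¹, hd1, one_mul, h1]
  have hG : (aeval B D)⁻¹ * aeval B gN = M * (DA⁻¹ * gNA) * M⁻¹ := by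
    rw [hBDinv, hBgN]
    calc M * DA⁻¹ * M⁻¹ * (M * gNA * M⁻¹)
        = M * (DA⁻¹ * ((M⁻¹ * M) * (gNA * M⁻¹))) := by simp only [mul_assoc]
      _ = M * (DA⁻¹ * gNA) * M⁻¹ := by rw [h2, one_mul]; simp only [mul_assoc]
  set G := (aeval B D)⁻¹ * aeval B gN with hGdef
  -- norm bound:  M (DA⁻¹ gNA) b = G (M b)
  have hvec : M.mulVec ((DA⁻¹ * gNA).mulVec b) = G.mulVec (M.mulVec b) := by
    rw [hG, Matrix.mulVec_mulVec, Matrix.mulVec_mulVec]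
    congr 1
    rw [mul_assoc, h2, mul_one]
  -- operator norm bound
  have hopn : ‖(WithLp.equiv 2 (Fin n → ℂ)).symm (G.mulVec (M.mulVec b))‖
      ≤ opNorm G * ‖(WithLp.equiv 2 (Fin n → ℂ)).symm (M.mulVec b)‖ := by
    have happ : (Matrix.toEuclideanCLM (𝕜 := ℂ) G)
        ((WithLp.equiv 2 (Fin n → ℂ)).symm (M.mulVec b)) =
        (WithLp.equiv 2 (Fin n → ℂ)).symm (G.mulVec (M.mulVec b)) := by
      exact Matrix.toEuclideanCLM_toLp _ _
    rw [← happ]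
    exact (Matrix.toEuclideanCLM (𝕜 := ℂ) G).le_opNorm _
  -- supremum sets coincide
  have hsup : sSup ((fun z => ‖gN.eval z / D.eval z‖) '' numRange n B) =
      sSup ((fun z => ‖N.eval z / D.eval z - p.eval z‖) '' numRange n B) := by
    congr 1
    apply Set.image_congr
    intro z hz
    have hz0 : D.eval z ≠ 0 := hanal z hz
    rw [hgN]
    simp only [Polynomial.eval_sub, Polynomial.eval_mul]
    congr 1
    field_simp
  -- Crouzeix–Palencia bound
  have hBDu : IsUnit (aeval B D) := by
    rw [hBD]
    exact (hMu.mul hD).mul (Matrix.isUnit_nonsing_inv_iff.mpr hMu)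
  have hcp := hCP B gN D hanal hBDu
  rw [hsup] at hcp
  -- positivity of the denominator
  have hMb : M.mulVec b ≠ 0 := by
    intro h
    apply hb
    have : M⁻¹.mulVec (M.mulVec b) = (0 : Fin n → ℂ) := by rw [h, Matrix.mulVec_zero]
    rw [Matrix.mulVec_mulVec, h2, Matrix.one_mulVec] at this
    exact WithLp.ofLp_injective 2 this
  have hMb' : (WithLp.equiv 2 (Fin n → ℂ)).symm (M.mulVec b) ≠ 0 := by
    intro h
    exact hMb ((WithLp.equiv 2 (Fin n → ℂ)).symm.injective (h.trans rfl))
  have hpos : 0 < ‖(WithLp.equiv 2 (Fin n → ℂ)).symm (M.mulVec b)‖ :=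
    norm_pos_iff.mpr hMb'
  -- put everything together
  rw [hSnorm, hSnorm, div_le_iff₀ hpos]
  calc ‖(WithLp.equiv 2 (Fin n → ℂ)).symm
        (M.mulVec ((WithLp.equiv 2 (Fin n → ℂ)).symm ((DA⁻¹ * NA).mulVec b) - xk))‖
      = Snorm n ((aeval A D)ᴴ * aeval A D)
          ((WithLp.equiv 2 (Fin n → ℂ)).symm ((DA⁻¹ * NA).mulVec b) - xk) := (hSnorm _).symm
    _ ≤ Snorm n ((aeval A D)ᴴ * aeval A D)
          ((WithLp.equiv 2 (Fin n → ℂ)).symm ((DA⁻¹ * gNA).mulVec b)) := hstep1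
    _ = ‖(WithLp.equiv 2 (Fin n → ℂ)).symm
          (M.mulVec ((WithLp.equiv 2 (Fin n → ℂ)).symm ((DA⁻¹ * gNA).mulVec b)))‖ := hSnorm _
    _ = ‖(WithLp.equiv 2 (Fin n → ℂ)).symm (G.mulVec (M.mulVec b))‖ := by rw [← hvec]; rfl
    _ ≤ opNorm G * ‖(WithLp.equiv 2 (Fin n → ℂ)).symm (M.mulVec b)‖ := hopn
    _ ≤ ((1 + Real.sqrt 2) *
          sSup ((fun z => ‖N.eval z / D.eval z - p.eval z‖) '' numRange n B)) *
          ‖(WithLp.equiv 2 (Fin n → ℂ)).symm (M.mulVec b)‖ :=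
        mul_le_mul_of_nonneg_right hcp (norm_nonneg _)
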